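/- Let c > 0, let p ∈ ℝⁿ be a unit vector, and let h : ℝ → ℝ be integrable with h(τ) = 0 for all τ < 1 and with ĥ(ζ) = ∫_ℝ h(τ)e^{iζτ}dτ ≠ 0 for every ζ ∈ ℝ. Let f ∈ L¹(ℝⁿ) be real-valued and supported in the closed unit ball {x : ‖x‖ ≤ 1}. If for every d ∈ ℝⁿ, ∫_{ℝⁿ} ∫₀^∞ h(ct − p·x) f(x) e^{i(c‖d‖ t + d·x)} dt dx = 0, then f = 0 almost everywhere. -/

import Mathlib

open MeasureTheory Set
open scoped RealInnerProductSpace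

open scoped ContDiff

noncomputable section

/-- A smooth compactly supported real function, viewed as a complex-valued Schwartz map. -/
def mySchwartzOfCompactSupport {E : Type*} [NormedAddCommGroup E] [NormedSpace ℝ E]
    (g : E → ℝ) (hg : ContDiff ℝ ∞ g) (hs : HasCompactSupport g) : SchwartzMap E ℂ where
  toFun x := (g x : ℂ)
  smooth' := Complex.ofRealCLM.contDiff.comp hg
  decay' := by
    intro k m
    have hc : Continuous fun x => ‖x‖ ^ k * ‖iteratedFDeriv ℝ m g x‖ :=
      (continuous_norm.pow k).mul (hg.continuous_iteratedFDeriv (mod_cast le_top)).norm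
    have hcs : HasCompactSupport fun x => ‖x‖ ^ k * ‖iteratedFDeriv ℝ m g x‖ :=
      HasCompactSupport.mul_left ((hs.iteratedFDeriv m).norm)
    obtain ⟨C, hC⟩ := hcs.exists_bound_of_continuous hc
    refine ⟨‖Complex.ofRealCLM‖ * C, fun x => ?_⟩
    have h1 : iteratedFDeriv ℝ m (fun x => (g x : ℂ)) x
        = Complex.ofRealCLM.compContinuousMultilinearMap (iteratedFDeriv ℝ m g x) :=
      Complex.ofRealCLM.iteratedFDeriv_comp_left hg.contDiffAt (mod_cast le_top)
    calc ‖x‖ ^ k * ‖iteratedFDeriv ℝ m (fun x => (g x : ℂ)) x‖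
        ≤ ‖x‖ ^ k * (‖Complex.ofRealCLM‖ * ‖iteratedFDeriv ℝ m g x‖) := by
          rw [h1]
          gcongr
          exact Complex.ofRealCLM.norm_compContinuousMultilinearMap_le _
      _ = ‖Complex.ofRealCLM‖ * (‖x‖ ^ k * ‖iteratedFDeriv ℝ m g x‖) := by ring
      _ ≤ ‖Complex.ofRealCLM‖ * C :=
          mul_le_mul_of_nonneg_left (by simpa using hC x) (norm_nonneg _)

@[simp] lemma mySchwartzOfCompactSupport_apply {E : Type*} [NormedAddCommGroup E] [NormedSpace ℝ E]
    (g : E → ℝ) (hg : ContDiff ℝ ∞ g) (hs : HasCompactSupport g) (x : E) :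
    mySchwartzOfCompactSupport g hg hs x = (g x : ℂ) := rfl

end

/-- The parametric oscillatory integral `s ↦ ∫ w(x) e^{i s a(x)}` is (real-)analytic on `ℝ`
when `w` is integrable and `|a| ≤ 1` on the support of `w`. -/
lemma analyticOnNhd_integral_exp {α : Type*} [MeasurableSpace α] {μ : Measure α}
    {w : α → ℂ} {a : α → ℝ} (hw : Integrable w μ) (ha : AEStronglyMeasurable a μ)
    (hbd : ∀ x, w x ≠ 0 → |a x| ≤ 1) :
    AnalyticOnNhd ℝ (fun s : ℝ => ∫ x, w x * Complex.exp (Complex.I * s * a x) ∂μ) univ := by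
  set M := ∫ x, ‖w x‖ ∂μ with hM
  set cc : ℕ → ℂ :=
    fun k => (Complex.I ^ k / k.factorial) * ∫ x, w x * (a x : ℂ) ^ k ∂μ with hcc
  set P : FormalMultilinearSeries ℝ ℝ ℂ :=
    fun k => ContinuousMultilinearMap.mkPiRing ℝ (Fin k) (cc k) with hP
  have hmeasa : AEStronglyMeasurable (fun x => (a x : ℂ)) μ :=
    Complex.continuous_ofReal.comp_aestronglyMeasurable ha
  have hna : ∀ x, w x ≠ 0 → ‖(a x : ℂ)‖ ≤ 1 := by
    intro x hx
    rw [Complex.norm_real, Real.norm_eq_abs]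
    exact hbd x hx
  have key : ∀ (k : ℕ) (x : α), ‖w x * (a x : ℂ) ^ k‖ ≤ ‖w x‖ := by
    intro k x
    by_cases hx : w x = 0
    · simp [hx]
    · rw [norm_mul, norm_pow]
      exact mul_le_of_le_one_right (norm_nonneg _)
        (pow_le_one₀ (norm_nonneg _) (hna x hx))
  have hcnorm : ∀ k : ℕ, ‖cc k‖ ≤ M / k.factorial := by
    intro k
    have h1 : ‖∫ x, w x * (a x : ℂ) ^ k ∂μ‖ ≤ M :=
      norm_integral_le_of_norm_le hw.norm (Filter.Eventually.of_forall (key k))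
    have h2 : ‖(Complex.I ^ k / (k.factorial : ℂ))‖ = ((k.factorial : ℝ))⁻¹ := by
      simp [norm_div, abs_of_nonneg]
    calc ‖cc k‖ = ((k.factorial : ℝ))⁻¹ * ‖∫ x, w x * (a x : ℂ) ^ k ∂μ‖ := by
          rw [hcc, norm_mul, h2]
      _ ≤ ((k.factorial : ℝ))⁻¹ * M := by gcongr
      _ = M / k.factorial := by ring
  have main : ∀ y : ℝ, HasSum (fun k : ℕ => cc k * (y : ℂ) ^ k)
      (∫ x, w x * Complex.exp (Complex.I * y * a x) ∂μ) := by
    intro y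
    set G : ℕ → α → ℂ :=
      fun k x => w x * ((Complex.I * y * a x) ^ k / k.factorial) with hG
    have hGbd : ∀ (k : ℕ) (x : α), ‖G k x‖ ≤ |y| ^ k / k.factorial * ‖w x‖ := by
      intro k x
      by_cases hx : w x = 0
      · simp [hG, hx]
      · rw [hG]
        have hz : ‖Complex.I * y * (a x : ℂ)‖ ≤ |y| := by
          rw [norm_mul, norm_mul, Complex.norm_I, one_mul, Complex.norm_real,
            Real.norm_eq_abs]
          rw [Complex.norm_real, Real.norm_eq_abs]
          exact mul_le_of_le_one_right (abs_nonneg _) (hbd x hx)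
        calc ‖w x * ((Complex.I * ↑y * (a x : ℂ)) ^ k / ((k.factorial : ℕ) : ℂ))‖
            = ‖w x‖ * (‖Complex.I * ↑y * (a x : ℂ)‖ ^ k / ((k.factorial : ℕ) : ℝ)) := by
              rw [norm_mul, norm_div, norm_pow, Complex.norm_natCast]
          _ ≤ ‖w x‖ * (|y| ^ k / ((k.factorial : ℕ) : ℝ)) := by gcongr
          _ = |y| ^ k / k.factorial * ‖w x‖ := by ring
    have hGint : ∀ k : ℕ, Integrable (G k) μ := by
      intro k
      refine (hw.norm.const_mul (|y| ^ k / k.factorial)).mono' ?_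
        (Filter.Eventually.of_forall (hGbd k))
      exact hw.1.mul
        ((show Continuous fun z : ℂ => (Complex.I * y * z) ^ k / ((k.factorial : ℕ) : ℂ) by
          fun_prop).comp_aestronglyMeasurable hmeasa)
    have hGsum : Summable fun k => ∫ x, ‖G k x‖ ∂μ := by
      refine Summable.of_nonneg_of_le
        (fun k => integral_nonneg fun x => norm_nonneg _) (fun k => ?_)
        ((Real.summable_pow_div_factorial |y|).mul_right M)
      calc ∫ x, ‖G k x‖ ∂μ ≤ ∫ x, |y| ^ k / k.factorial * ‖w x‖ ∂μ :=
            integral_mono_of_nonneg (Filter.Eventually.of_forall fun x => norm_nonneg _)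
              (hw.norm.const_mul _) (Filter.Eventually.of_forall (hGbd k))
        _ = |y| ^ k / k.factorial * M := by rw [integral_const_mul]
    have hkey := hasSum_integral_of_summable_integral_norm hGint hGsum
    have h1 : ∀ x, ∑' k, G k x = w x * Complex.exp (Complex.I * y * a x) := by
      intro x
      have hh := (NormedSpace.expSeries_div_hasSum_exp (Complex.I * y * a x)).mul_left (w x)
      rw [← Complex.exp_eq_exp_ℂ] at hh
      exact hh.tsum_eq
    have h2 : ∀ k : ℕ, ∫ x, G k x ∂μ = cc k * (y : ℂ) ^ k := by
      intro k
      have e1 : ∀ x, G k x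
          = ((Complex.I * y) ^ k / k.factorial) * (w x * (a x : ℂ) ^ k) := by
        intro x
        rw [hG]
        simp only [mul_pow]
        ring
      rw [integral_congr_ae (Filter.Eventually.of_forall e1), integral_const_mul, hcc,
        mul_pow]
      ring
    rw [integral_congr_ae (Filter.Eventually.of_forall h1)] at hkey
    simp only [h2] at hkey
    exact hkey
  have hps : HasFPowerSeriesOnBall
      (fun s : ℝ => ∫ x, w x * Complex.exp (Complex.I * s * a x) ∂μ) P 0 ⊤ := by
    refine ⟨?_, by simp, ?_⟩
    · refine le_of_eq (P.radius_eq_top_of_summable_norm fun r => ?_).symm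
      refine Summable.of_nonneg_of_le (fun k => by positivity) (fun k => ?_)
        (((Real.summable_pow_div_factorial r).mul_left M))
      have : ‖P k‖ = ‖cc k‖ := ContinuousMultilinearMap.norm_mkPiRing (cc k)
      rw [this]
      calc ‖cc k‖ * (r : ℝ) ^ k ≤ M / k.factorial * (r : ℝ) ^ k := by
            gcongr
            exact hcnorm k
        _ = M * ((r : ℝ) ^ k / k.factorial) := by ring
    · intro y hy
      simp only [hP, ContinuousMultilinearMap.mkPiRing_apply, Finset.prod_const,
        Finset.card_univ, Fintype.card_fin, zero_add]
      have : ∀ k : ℕ, (y ^ k : ℝ) • cc k = cc k * (y : ℂ) ^ k := by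
        intro k
        rw [Complex.real_smul]
        push_cast
        ring
      simp only [this]
      exact main y
  have hball : Metric.eball (0 : ℝ) ⊤ = univ := by
    ext z
    simp [Metric.eball, edist_lt_top]
  have := hps.analyticOnNhd
  rwa [hball] at this

/-- Injectivity of the forward operator for traveling plane-wave illumination: if
`h(τ) = 0` for `τ < 1`, the Fourier transform of `h` never vanishes, `f` is real-valued,
integrable, supported in the closed unit ball, and all the moment conditions
`∫_{ℝⁿ} ∫₀^∞ h(ct − p·x) f(x) e^{i(c‖d‖t + d·x)} dt dx = 0` (for `d ∈ ℝⁿ`) hold, then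
`f = 0` almost everywhere. -/
theorem inverse_source_uniqueness (n : ℕ) (c : ℝ) (hc : 0 < c)
    (p : EuclideanSpace ℝ (Fin n)) (hp : ‖p‖ = 1)
    (h : ℝ → ℝ) (hint : Integrable h) (hzero : ∀ τ < (1 : ℝ), h τ = 0)
    (hhat : ∀ ζ : ℝ, (∫ τ : ℝ, (h τ : ℂ) * Complex.exp (Complex.I * (ζ * τ : ℝ))) ≠ 0)
    (f : EuclideanSpace ℝ (Fin n) → ℝ) (hf : Integrable f)
    (hsupp : ∀ x : EuclideanSpace ℝ (Fin n), 1 < ‖x‖ → f x = 0)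
    (hmoment : ∀ d : EuclideanSpace ℝ (Fin n),
      (∫ x : EuclideanSpace ℝ (Fin n), ∫ t in Ioi (0 : ℝ),
        (h (c * t - ⟪p, x⟫) : ℂ) * (f x : ℂ) *
          Complex.exp (Complex.I * ((c * ‖d‖ * t + ⟪d, x⟫ : ℝ) : ℂ))) = 0) :
    ∀ᵐ x, f x = 0 := by
  set Hh : ℝ → ℂ := fun ζ => ∫ τ : ℝ, (h τ : ℂ) * Complex.exp (Complex.I * (ζ * τ : ℝ))
    with hHh
  -- the `F`ourier-type transform of `f` with the `e^{+i ξ·x}` convention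
  set F : EuclideanSpace ℝ (Fin n) → ℂ := fun ξ => ∫ x : EuclideanSpace ℝ (Fin n), (f x : ℂ) * Complex.exp (Complex.I * ((⟪ξ, x⟫ : ℝ) : ℂ))
    with hF
  -- Step A: the inner `t`-integral
  have innerA : ∀ (d : EuclideanSpace ℝ (Fin n)) (x : EuclideanSpace ℝ (Fin n)), |⟪p, x⟫| ≤ 1 →
      (∫ t in Ioi (0 : ℝ), (h (c * t - ⟪p, x⟫) : ℂ) * (f x : ℂ) *
        Complex.exp (Complex.I * ((c * ‖d‖ * t + ⟪d, x⟫ : ℝ) : ℂ)))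
      = (((c⁻¹ : ℝ) : ℂ) * Hh ‖d‖) *
        ((f x : ℂ) * Complex.exp (Complex.I * ((⟪d, x⟫ + ‖d‖ * ⟪p, x⟫ : ℝ) : ℂ))) := by
    intro d x hax
    set a : ℝ := ⟪p, x⟫ with ha
    set ζ : ℝ := ‖d‖ with hζ
    set b : ℝ := ⟪d, x⟫ with hb
    set G : ℝ → ℂ := fun τ => (h τ : ℂ) * Complex.exp (Complex.I * ((ζ * τ : ℝ) : ℂ)) with hG
    have h1 : ∀ t : ℝ, (h (c * t - a) : ℂ) * (f x : ℂ) *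
        Complex.exp (Complex.I * ((c * ζ * t + b : ℝ) : ℂ))
        = ((f x : ℂ) * Complex.exp (Complex.I * ((b + ζ * a : ℝ) : ℂ))) * G (c * t - a) := by
      intro t
      have he : Complex.I * ((c * ζ * t + b : ℝ) : ℂ)
          = Complex.I * ((b + ζ * a : ℝ) : ℂ) + Complex.I * ((ζ * (c * t - a) : ℝ) : ℂ) := by
        push_cast
        ring
      rw [he, Complex.exp_add, hG]
      ring
    have h2 : (∫ t in Ioi (0 : ℝ), (h (c * t - a) : ℂ) * (f x : ℂ) *
        Complex.exp (Complex.I * ((c * ζ * t + b : ℝ) : ℂ)))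
        = ((f x : ℂ) * Complex.exp (Complex.I * ((b + ζ * a : ℝ) : ℂ))) *
          ∫ t in Ioi (0 : ℝ), G (c * t - a) := by
      rw [← integral_const_mul]
      exact integral_congr_ae (Filter.Eventually.of_forall fun t => h1 t)
    have hne : ∀ᵐ t : ℝ, t ≠ (0 : ℝ) := by
      rw [ae_iff]
      simp only [ne_eq, not_not, setOf_eq_eq_singleton]
      exact measure_singleton 0
    have h3 : (∫ t in Ioi (0 : ℝ), G (c * t - a)) = ∫ t : ℝ, G (c * t - a) := by
      refine setIntegral_eq_integral_of_ae_compl_eq_zero ?_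
      filter_upwards [hne] with t ht hnot
      have ht0 : t < 0 := lt_of_le_of_ne (by simpa using hnot) ht
      have hlt : c * t - a < 1 := by
        have h5 : c * t < 0 := mul_neg_of_pos_of_neg hc ht0
        have h6 : -a ≤ 1 := by
          have := (abs_le.1 hax).1
          linarith
        linarith
      rw [hG]
      simp [hzero _ hlt]
    have e1 : ∀ t : ℝ, c * t - a = c * (t - a / c) := by
      intro t
      rw [mul_sub, mul_div_cancel₀ _ hc.ne']
    have h4 : (∫ t : ℝ, G (c * t - a)) = ∫ u : ℝ, G (c * u) := by
      rw [← integral_sub_right_eq_self (fun u => G (c * u)) (a / c)]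
      refine integral_congr_ae (Filter.Eventually.of_forall fun t => ?_)
      simp only [e1 t]
    have h5 : (∫ u : ℝ, G (c * u)) = ((c⁻¹ : ℝ) : ℂ) * Hh ζ := by
      rw [MeasureTheory.Measure.integral_comp_mul_left G c, abs_of_pos (inv_pos.2 hc)]
      rw [Complex.real_smul, hHh, hG]
    rw [h2, h3, h4, h5]
    have he2 : Complex.I * ((b + ζ * a : ℝ) : ℂ) = Complex.I * ((b + ζ * a : ℝ) : ℂ) := rfl
    ring
  -- Step A': all the transforms on the shifted set vanish
  have hF0 : ∀ d : EuclideanSpace ℝ (Fin n), F (d + ‖d‖ • p) = 0 := by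
    intro d
    have hCne : (((c⁻¹ : ℝ) : ℂ) * Hh ‖d‖) ≠ 0 := by
      refine mul_ne_zero ?_ (hhat ‖d‖)
      simpa using (inv_ne_zero hc.ne')
    have hx : ∀ x : EuclideanSpace ℝ (Fin n), (∫ t in Ioi (0 : ℝ), (h (c * t - ⟪p, x⟫) : ℂ) * (f x : ℂ) *
        Complex.exp (Complex.I * ((c * ‖d‖ * t + ⟪d, x⟫ : ℝ) : ℂ)))
        = (((c⁻¹ : ℝ) : ℂ) * Hh ‖d‖) *
          ((f x : ℂ) * Complex.exp (Complex.I * ((⟪d, x⟫ + ‖d‖ * ⟪p, x⟫ : ℝ) : ℂ))) := by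
      intro x
      by_cases hfx : f x = 0
      · simp [hfx]
      · refine innerA d x ?_
        have hx1 : ‖x‖ ≤ 1 := le_of_not_gt fun hgt => hfx (hsupp x hgt)
        calc |⟪p, x⟫| ≤ ‖p‖ * ‖x‖ := abs_real_inner_le_norm p x
          _ ≤ 1 := by rw [hp, one_mul]; exact hx1
    have hmm := hmoment d
    rw [integral_congr_ae (Filter.Eventually.of_forall hx), integral_const_mul] at hmm
    have h6 := (mul_eq_zero.1 hmm).resolve_left hCne
    rw [hF, ← h6]
    refine integral_congr_ae (Filter.Eventually.of_forall fun x => ?_)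
    simp only [inner_add_left, real_inner_smul_left]
  -- Step B: the transform vanishes on the half-space `⟪p, ξ⟫ > 0`
  have hhalf : ∀ ξ : EuclideanSpace ℝ (Fin n), 0 < ⟪p, ξ⟫ → F ξ = 0 := by
    intro ξ hξ
    set s : ℝ := ‖ξ‖ ^ 2 / (2 * ⟪p, ξ⟫) with hs
    have hs0 : 0 ≤ s := div_nonneg (sq_nonneg _) (by linarith)
    set d : EuclideanSpace ℝ (Fin n) := ξ - s • p with hd
    have hds : ‖d‖ = s := by
      have hsq : ‖d‖ ^ 2 = s ^ 2 := by
        have h7 : ⟪d, d⟫ = ⟪ξ, ξ⟫ - 2 * (s * ⟪p, ξ⟫) + s ^ 2 * ⟪p, p⟫ := by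
          rw [hd, real_inner_sub_sub_self]
          simp only [real_inner_smul_left, real_inner_smul_right]
          rw [real_inner_comm ξ p]
          ring
        have h8 : ⟪p, p⟫ = (1 : ℝ) := by
          rw [real_inner_self_eq_norm_sq, hp, one_pow]
        have h9 : 2 * (s * ⟪p, ξ⟫) = ‖ξ‖ ^ 2 := by
          have hne : (2 : ℝ) * ⟪p, ξ⟫ ≠ 0 := by positivity
          rw [hs, show 2 * (‖ξ‖ ^ 2 / (2 * ⟪p, ξ⟫) * ⟪p, ξ⟫)
            = ‖ξ‖ ^ 2 / (2 * ⟪p, ξ⟫) * (2 * ⟪p, ξ⟫) from by ring,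
            div_mul_cancel₀ _ hne]
        rw [← real_inner_self_eq_norm_sq, h7, h8, h9, real_inner_self_eq_norm_sq]
        ring
      rw [← Real.sqrt_sq (norm_nonneg d), hsq, Real.sqrt_sq hs0]
    have hsum : d + ‖d‖ • p = ξ := by
      rw [hds, hd, sub_add_cancel]
    rw [← hsum]
    exact hF0 d
  -- Step C: by analyticity along lines, the transform vanishes everywhere
  have hall : ∀ ξ : EuclideanSpace ℝ (Fin n), F ξ = 0 := by
    intro ξ
    set w : EuclideanSpace ℝ (Fin n) → ℂ := fun x => (f x : ℂ) * Complex.exp (Complex.I * ((⟪ξ, x⟫ : ℝ) : ℂ)) with hw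
    have hwnorm : ∀ x : EuclideanSpace ℝ (Fin n), ‖w x‖ = |f x| := by
      intro x
      rw [hw]
      simp [Complex.norm_exp]
    have hwint : Integrable w := by
      refine hf.norm.mono' ?_ (Filter.Eventually.of_forall fun x => ?_)
      · exact hf.ofReal.1.mul ((Complex.continuous_exp.comp ((continuous_const.mul
          (Complex.continuous_ofReal.comp (Continuous.inner continuous_const
            continuous_id))))).aestronglyMeasurable)
      · rw [hwnorm x, Real.norm_eq_abs]
    have hwbd : ∀ x : EuclideanSpace ℝ (Fin n), w x ≠ 0 → |⟪p, x⟫| ≤ 1 := by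
      intro x hx
      have hfx : f x ≠ 0 := by
        intro h0
        exact hx (by rw [hw]; simp [h0])
      have hx1 : ‖x‖ ≤ 1 := le_of_not_gt fun hgt => hfx (hsupp x hgt)
      calc |⟪p, x⟫| ≤ ‖p‖ * ‖x‖ := abs_real_inner_le_norm p x
        _ ≤ 1 := by rw [hp, one_mul]; exact hx1
    have han := analyticOnNhd_integral_exp (a := fun x : EuclideanSpace ℝ (Fin n) => ⟪p, x⟫) hwint
      ((Continuous.inner continuous_const continuous_id).aestronglyMeasurable) hwbd
    set g : ℝ → ℂ := fun st => ∫ x : EuclideanSpace ℝ (Fin n), w x * Complex.exp (Complex.I * st * (⟪p, x⟫ : ℝ))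
      with hg
    have hgF : ∀ st : ℝ, g st = F (ξ + st • p) := by
      intro st
      rw [hg, hF]
      refine integral_congr_ae (Filter.Eventually.of_forall fun x => ?_)
      simp only [hw, inner_add_left, real_inner_smul_left]
      have he3 : Complex.I * ((⟪ξ, x⟫ + st * ⟪p, x⟫ : ℝ) : ℂ)
          = Complex.I * ((⟪ξ, x⟫ : ℝ) : ℂ) + Complex.I * (st : ℂ) * ((⟪p, x⟫ : ℝ) : ℂ) := by
        push_cast
        ring
      rw [he3, Complex.exp_add]
      ring
    have hgz : ∀ st : ℝ, -⟪p, ξ⟫ < st → g st = 0 := by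
      intro st hst
      rw [hgF st]
      refine hhalf _ ?_
      rw [inner_add_right, real_inner_smul_right, real_inner_self_eq_norm_sq, hp]
      nlinarith
    have heq : EqOn g 0 univ := by
      refine han.eqOn_zero_of_preconnected_of_eventuallyEq_zero isPreconnected_univ
        (mem_univ (-⟪p, ξ⟫ + 1)) ?_
      refine Filter.eventually_of_mem (Ioi_mem_nhds (by linarith : -⟪p, ξ⟫ < -⟪p, ξ⟫ + 1)) ?_
      intro st hst
      exact hgz st hst
    have h10 : F ξ = g 0 := by
      rw [hgF 0]
      congr 1
      rw [zero_smul, add_zero]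
    rw [h10]
    exact heq (mem_univ 0)
  -- Step D: injectivity of the Fourier transform
  have hfc : Integrable fun x : EuclideanSpace ℝ (Fin n) => (f x : ℂ) := hf.ofReal
  have hFT : FourierTransform.fourier (fun x : EuclideanSpace ℝ (Fin n) => (f x : ℂ)) = 0 := by
    funext ξ'
    rw [Real.fourier_eq]
    have h11 : ∀ v : EuclideanSpace ℝ (Fin n), Real.fourierChar (-⟪v, ξ'⟫) • ((f v : ℝ) : ℂ)
        = (f v : ℂ) * Complex.exp (Complex.I * ((⟪(-(2 * Real.pi)) • ξ', v⟫ : ℝ) : ℂ)) := by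
      intro v
      have h12 : (((2 * Real.pi * (-⟪v, ξ'⟫) : ℝ)) : ℂ) * Complex.I
          = Complex.I * ((⟪(-(2 * Real.pi)) • ξ', v⟫ : ℝ) : ℂ) := by
        rw [real_inner_smul_left, real_inner_comm]
        push_cast
        ring
      rw [Circle.smul_def, Real.fourierChar_apply, h12, smul_eq_mul, mul_comm]
    rw [integral_congr_ae (Filter.Eventually.of_forall h11)]
    show F ((-(2 * Real.pi)) • ξ') = (0 : EuclideanSpace ℝ (Fin n) → ℂ) ξ'
    rw [hall]
    rfl
  have hphi : ∀ φ : SchwartzMap (EuclideanSpace ℝ (Fin n)) ℂ, (∫ x : EuclideanSpace ℝ (Fin n), (f x : ℂ) * φ x) = 0 := by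
    intro φ
    set G := (SchwartzMap.fourierTransformCLE ℂ (SchwartzMap (EuclideanSpace ℝ (Fin n)) ℂ)).symm φ with hGdef
    have hG : FourierTransform.fourier (⇑G) = ⇑φ := by
      rw [← SchwartzMap.fourier_coe, ← SchwartzMap.fourierTransformCLE_apply (R := ℂ) (f := G), hGdef]
      exact congrArg DFunLike.coe ((FourierTransform.fourierCLE ℂ (SchwartzMap (EuclideanSpace ℝ (Fin n)) ℂ)).apply_symm_apply φ)
    have flipEq : (innerₗ (EuclideanSpace ℝ (Fin n))).flip = innerₗ (EuclideanSpace ℝ (Fin n)) := by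
      apply LinearMap.ext
      intro x
      apply LinearMap.ext
      intro y
      simpa using real_inner_comm y x
    have key := VectorFourier.integral_fourierIntegral_smul_eq_flip
      (e := Real.fourierChar) (L := innerₗ (EuclideanSpace ℝ (Fin n))) (μ := volume) (ν := volume)
      Real.continuous_fourierChar (by exact continuous_inner) hfc G.integrable
    rw [flipEq] at key
    have hkeyL : (∫ ξ' : EuclideanSpace ℝ (Fin n), VectorFourier.fourierIntegral Real.fourierChar volume
        (innerₗ (EuclideanSpace ℝ (Fin n))) (fun x : EuclideanSpace ℝ (Fin n) => (f x : ℂ)) ξ' • G ξ') = 0 := by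
      have : ∀ ξ' : EuclideanSpace ℝ (Fin n), VectorFourier.fourierIntegral Real.fourierChar volume
          (innerₗ (EuclideanSpace ℝ (Fin n))) (fun x : EuclideanSpace ℝ (Fin n) => (f x : ℂ)) ξ' • G ξ' = 0 := by
        intro ξ'
        have h13 : VectorFourier.fourierIntegral Real.fourierChar volume
            (innerₗ (EuclideanSpace ℝ (Fin n))) (fun x : EuclideanSpace ℝ (Fin n) => (f x : ℂ)) ξ' = 0 := by
          have := congrFun hFT ξ'
          exact this
        rw [h13, zero_smul]
      rw [integral_congr_ae (Filter.Eventually.of_forall this), integral_zero]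
    rw [hkeyL] at key
    have h14 : ∀ x : EuclideanSpace ℝ (Fin n), (f x : ℂ) • VectorFourier.fourierIntegral Real.fourierChar volume
        (innerₗ (EuclideanSpace ℝ (Fin n))) (⇑G) x = (f x : ℂ) * φ x := by
      intro x
      have := congrFun hG x
      rw [show VectorFourier.fourierIntegral Real.fourierChar volume (innerₗ (EuclideanSpace ℝ (Fin n))) (⇑G) x
        = FourierTransform.fourier (⇑G) x from rfl, this, smul_eq_mul]
    rw [integral_congr_ae (Filter.Eventually.of_forall h14)] at key
    exact key.symm
  have hfc0 : ∀ᵐ x : EuclideanSpace ℝ (Fin n), (f x : ℂ) = 0 := by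
    refine ae_eq_zero_of_integral_contDiff_smul_eq_zero
      (hf.ofReal.locallyIntegrable) fun g hgsm hgcs => ?_
    have := hphi (mySchwartzOfCompactSupport g hgsm hgcs)
    rw [← this]
    refine integral_congr_ae (Filter.Eventually.of_forall fun x => ?_)
    show g x • (f x : ℂ) = (f x : ℂ) * (mySchwartzOfCompactSupport g hgsm hgcs) x
    rw [mySchwartzOfCompactSupport_apply, Complex.real_smul]
    ring
  filter_upwards [hfc0] with x hx
  exact_mod_cast hx
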